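/- Let (γ_k)_{k≥0} be real coefficients of a power series f(x) = ∑_{k≥0} γ_k x^k with radius of convergence ρ strictly larger than max{|λ_j| : j = 1,...,N}, and let u ⊆ {1,...,N}. Then the series f(A) = ∑_{k≥0} γ_k A^k converges and det(f(A)_{uu}) = ∑_{σ∈S_N} ε(σ) (∏_{j=1}^N p_{jσ(j)}) ∏_{i∈u} f(λ_{σ(i)}), where f(A)_{uu} is the submatrix of f(A) with rows and columns indexed by u. -/

import Mathlib

open Matrix BigOperators

/-- For an analytic function `f(x) = ∑ γ_k x^k` whose radius of convergence exceeds the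
spectral radius of `A`, the series `f(A) = ∑ γ_k A^k` converges and
`det(f(A)_{uu}) = E(∏_{i∈u} f(X_i))` under the joint spectral measure. -/
theorem det_fun_submatrix_eq_gen_moment (N : ℕ)
    (A P : Matrix (Fin N) (Fin N) ℝ) (lam : Fin N → ℝ)
    (hsymm : A.IsSymm)
    (hdecomp : A = P * Matrix.diagonal lam * Pᵀ)
    (horth : P * Pᵀ = 1)
    (hdet : P.det = 1)
    (γ : ℕ → ℝ) (ρ : ℝ)
    (hρ : ∀ j : Fin N, |lam j| < ρ)
    (hconv : ∀ x : ℝ, |x| < ρ → Summable fun k : ℕ => γ k * x ^ k)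
    (u : Finset (Fin N)) :
    Summable (fun k : ℕ => γ k • A ^ k) ∧
    Matrix.det ((∑' k : ℕ, γ k • A ^ k).submatrix
        (fun i : {i // i ∈ u} => (i : Fin N)) (fun i : {i // i ∈ u} => (i : Fin N)))
      = ∑ σ : Equiv.Perm (Fin N),
          ((Equiv.Perm.sign σ : ℤ) : ℝ) * (∏ j : Fin N, P j (σ j)) *
            ∏ i ∈ u, ∑' k : ℕ, γ k * lam (σ i) ^ k := by
  have horth' : Pᵀ * P = 1 := mul_eq_one_comm.mp horth
  -- powers of A
  have hmul : ∀ d1 d2 : Fin N → ℝ,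
      (P * Matrix.diagonal d1 * Pᵀ) * (P * Matrix.diagonal d2 * Pᵀ)
        = P * Matrix.diagonal (fun j => d1 j * d2 j) * Pᵀ := by
    intro d1 d2
    calc (P * Matrix.diagonal d1 * Pᵀ) * (P * Matrix.diagonal d2 * Pᵀ)
        = P * Matrix.diagonal d1 * (Pᵀ * P) * Matrix.diagonal d2 * Pᵀ := by
          simp only [Matrix.mul_assoc]
      _ = P * (Matrix.diagonal d1 * Matrix.diagonal d2) * Pᵀ := by
          rw [horth', mul_one, Matrix.mul_assoc P]
      _ = P * Matrix.diagonal (fun j => d1 j * d2 j) * Pᵀ := by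
          rw [Matrix.diagonal_mul_diagonal]
  have hpow : ∀ k : ℕ, A ^ k = P * Matrix.diagonal (fun j => lam j ^ k) * Pᵀ := by
    intro k
    induction k with
    | zero => simp [horth]
    | succ k ih =>
        rw [pow_succ, ih, hdecomp, hmul]
        simp_rw [← pow_succ]
  -- each term
  have hterm : ∀ k : ℕ, γ k • A ^ k
      = P * Matrix.diagonal (fun j => γ k * lam j ^ k) * Pᵀ := by
    intro k
    rw [hpow k]
    rw [show (fun j => γ k * lam j ^ k) = γ k • (fun j => lam j ^ k) by
      funext j; simp [mul_comm]]
    rw [Matrix.diagonal_smul, Matrix.mul_smul, Matrix.smul_mul]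
  -- the limit function
  set F : Fin N → ℝ := fun j => ∑' k : ℕ, γ k * lam j ^ k with hF
  have hFsum : ∀ j, HasSum (fun k : ℕ => γ k * lam j ^ k) (F j) :=
    fun j => (hconv _ (hρ j)).hasSum
  have hdiag : HasSum (fun k : ℕ => Matrix.diagonal (fun j => γ k * lam j ^ k))
      (Matrix.diagonal F) := by
    have h1 : HasSum (fun k : ℕ => fun j => γ k * lam j ^ k) F :=
      Pi.hasSum.mpr hFsum
    exact h1.map (Matrix.diagonalAddMonoidHom (Fin N) ℝ)
      (continuous_id.matrix_diagonal)
  have hM : HasSum (fun k : ℕ => γ k • A ^ k) (P * Matrix.diagonal F * Pᵀ) := by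
    have h2 := (hdiag.map (AddMonoidHom.mulLeft P)
        (continuous_const.matrix_mul continuous_id)).map
        (AddMonoidHom.mulRight Pᵀ) (continuous_id.matrix_mul continuous_const)
    simpa [Function.comp_def, hterm] using h2
  refine ⟨hM.summable, ?_⟩
  rw [hM.tsum_eq]
  -- the determinant identity
  set M : Matrix (Fin N) (Fin N) ℝ := P * Matrix.diagonal F * Pᵀ with hMdef
  set Q : Matrix (Fin N) (Fin N) ℝ :=
    Matrix.of fun j k => if j ∈ u then P j k * F k else P j k with hQ
  -- RHS = det Qᵀ
  have hrhs : (∑ σ : Equiv.Perm (Fin N),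
      ((Equiv.Perm.sign σ : ℤ) : ℝ) * (∏ j : Fin N, P j (σ j)) *
        ∏ i ∈ u, F (σ i)) = Q.det := by
    rw [← Matrix.det_transpose, Matrix.det_apply']
    refine Finset.sum_congr rfl fun σ _ => ?_
    rw [mul_assoc]
    congr 1
    have : ∀ j, Qᵀ (σ j) j = P j (σ j) * (if j ∈ u then F (σ j) else 1) := by
      intro j
      by_cases hj : j ∈ u <;> simp [hQ, hj]
    rw [Finset.prod_congr rfl fun j _ => this j, Finset.prod_mul_distrib,
      Finset.prod_ite_mem, Finset.univ_inter]
  -- Q * Pᵀ agrees with M on rows of u and with 1 elsewhere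
  set R : Matrix (Fin N) (Fin N) ℝ :=
    Matrix.of fun j k => if j ∈ u then M j k
      else (1 : Matrix (Fin N) (Fin N) ℝ) j k with hR
  have hQP : Q * Pᵀ = R := by
    ext i j
    by_cases hi : i ∈ u
    · simp only [hR, Matrix.of_apply, hi, if_pos, Matrix.mul_apply, hQ,
        Matrix.transpose_apply, hMdef, Matrix.mul_diagonal, Matrix.diagonal_apply,
        mul_ite, mul_zero, ite_mul, zero_mul, Finset.sum_ite_eq, Finset.sum_ite_eq',
        Finset.mem_univ, if_true]
    · have h1 : (Q * Pᵀ) i j = (P * Pᵀ) i j := by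
        simp [Matrix.mul_apply, hQ, hi]
      simp only [hR, Matrix.of_apply, hi, if_neg, not_false_iff]
      rw [h1, horth]
  -- det R = det (M_uu) via block decomposition
  have hdetR : R.det = (M.submatrix
      (fun i : {i // i ∈ u} => (i : Fin N)) (fun i : {i // i ∈ u} => (i : Fin N))).det := by
    rw [← Matrix.det_submatrix_equiv_self (Equiv.sumCompl (fun i : Fin N => i ∈ u)) R]
    have hblock : R.submatrix ⇑(Equiv.sumCompl (fun i : Fin N => i ∈ u))
          ⇑(Equiv.sumCompl (fun i : Fin N => i ∈ u)) =
        Matrix.fromBlocks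
          (M.submatrix (fun i : {i // i ∈ u} => (i : Fin N))
            (fun i : {i // i ∈ u} => (i : Fin N)))
          (M.submatrix (fun i : {i // i ∈ u} => (i : Fin N))
            (fun i : {i // ¬ i ∈ u} => (i : Fin N)))
          0 1 := by
      ext i j
      cases i with
      | inl i =>
          cases j with
          | inl j => simp [hR, i.2]
          | inr j => simp [hR, i.2]
      | inr i =>
          cases j with
          | inl j =>
              have hne : (i : Fin N) ≠ (j : Fin N) := by
                intro h; exact i.2 (h ▸ j.2)
              simp [hR, i.2, Matrix.one_apply, hne]
          | inr j =>
              simp [hR, i.2, Matrix.one_apply, Subtype.ext_iff]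
    rw [hblock, Matrix.det_fromBlocks_zero₂₁, Matrix.det_one, mul_one]
  calc (M.submatrix (fun i : {i // i ∈ u} => (i : Fin N))
          (fun i : {i // i ∈ u} => (i : Fin N))).det
      = R.det := (hdetR).symm
    _ = (Q * Pᵀ).det := by rw [hQP]
    _ = Q.det * Pᵀ.det := Matrix.det_mul _ _
    _ = Q.det := by rw [Matrix.det_transpose, hdet, mul_one]
    _ = _ := hrhs.symm
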